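/- arXiv:2604.03935 — 2 statements merged into one kernel-verified Lean document; each statement's English description precedes it below -/
import Mathlib

section
/- For every real number a > 0, it holds that 1/2 < (1+a)·(e^{-a} - 1 + a)/a² < 1. -/
private lemma etd_aux_deriv (x : ℝ) :
    HasDerivAt (fun x : ℝ => (1 + x) * (Real.exp (-x) - 1 + x) - x ^ 2 / 2)
      (x * (1 - Real.exp (-x))) x := by
  have hexp : HasDerivAt (fun x : ℝ => Real.exp (-x)) (Real.exp (-x) * (-1)) x :=
    (Real.hasDerivAt_exp (-x)).comp x ((hasDerivAt_id x).neg)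
  have h1 : HasDerivAt (fun x : ℝ => 1 + x) 1 x := (hasDerivAt_id x).const_add 1
  have h2 : HasDerivAt (fun x : ℝ => Real.exp (-x) - 1 + x) (Real.exp (-x) * (-1) + 1) x :=
    (hexp.sub_const 1).add (hasDerivAt_id x)
  have h3 := (h1.mul h2).sub ((hasDerivAt_pow 2 x).div_const 2)
  refine h3.congr_deriv ?_
  norm_num
  ring

private lemma etd_aux_lower (a : ℝ) (ha : 0 < a) :
    a ^ 2 / 2 < (1 + a) * (Real.exp (-a) - 1 + a) := by
  set f : ℝ → ℝ := fun x => (1 + x) * (Real.exp (-x) - 1 + x) - x ^ 2 / 2 with hf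
  have hmono : StrictMonoOn f (Set.Ici (0 : ℝ)) := by
    apply strictMonoOn_of_deriv_pos (convex_Ici 0)
    · exact (Continuous.mul (by continuity) (by continuity)).sub (by continuity)
        |>.continuousOn
    · intro x hx
      rw [interior_Ici] at hx
      rw [(etd_aux_deriv x).deriv]
      have : Real.exp (-x) < 1 := by
        rw [Real.exp_lt_one_iff]; linarith [hx.out]
      have := hx.out
      nlinarith
  have h0 : f 0 = 0 := by simp [hf]
  have := hmono (Set.self_mem_Ici) (Set.mem_Ici.mpr ha.le) ha
  rw [h0] at this
  simp only [hf] at this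
  linarith

theorem etd_phi2_bound (a : ℝ) (ha : 0 < a) :
    1 / 2 < (1 + a) * ((Real.exp (-a) - 1 + a) / a ^ 2) ∧
      (1 + a) * ((Real.exp (-a) - 1 + a) / a ^ 2) < 1 := by
  have ha2 : (0:ℝ) < a ^ 2 := by positivity
  have heq : (1 + a) * ((Real.exp (-a) - 1 + a) / a ^ 2)
      = ((1 + a) * (Real.exp (-a) - 1 + a)) / a ^ 2 := by ring
  constructor
  · rw [heq, lt_div_iff₀ ha2]
    have := etd_aux_lower a ha
    linarith
  · rw [heq, div_lt_one ha2]
    have h1 : 1 + a < Real.exp a := by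
      have := Real.add_one_lt_exp (ne_of_gt ha); linarith
    have hpos : (0:ℝ) < 1 + a := by linarith
    have h2 : Real.exp (-a) < 1 / (1 + a) := by
      rw [Real.exp_neg, one_div]
      exact inv_strictAnti₀ hpos h1
    have h3 : (1 + a) * (1 / (1 + a)) = 1 := mul_one_div_cancel (ne_of_gt hpos)
    nlinarith [mul_lt_mul_of_pos_left h2 hpos]
end

section
/- For every real number a > 0, it holds that 0 < (1+a)·(φ₁(a) - φ₂(a)) < 1, where φ₁(a) = (1-e^{-a})/a and φ₂(a) = (e^{-a}-1+a)/a². -/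
private lemma etd_g_pos (a : ℝ) (ha : 0 < a) :
    0 < Real.exp (-a) * (1 - a ^ 2) + 2 * a - 1 := by
  set g : ℝ → ℝ := fun x => Real.exp (-x) * (1 - x ^ 2) + 2 * x - 1 with hg
  have hderiv : ∀ x : ℝ, HasDerivAt g (Real.exp (-x) * (x ^ 2 - 2 * x - 1) + 2) x := by
    intro x
    have h1 : HasDerivAt (fun y : ℝ => Real.exp (-y)) (-Real.exp (-x)) x := by
      exact ((Real.hasDerivAt_exp (-x)).comp x ((hasDerivAt_id x).neg)).congr_deriv (by simp)
    have h2 : HasDerivAt (fun y : ℝ => 1 - y ^ 2) (-(2 * x)) x := by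
      simpa using ((hasDerivAt_pow 2 x).const_sub 1)
    have := (h1.mul h2).add_const (0 : ℝ)
    have h3 : HasDerivAt (fun y : ℝ => Real.exp (-y) * (1 - y ^ 2))
        (-Real.exp (-x) * (1 - x ^ 2) + Real.exp (-x) * -(2 * x)) x := h1.mul h2
    have h4 : HasDerivAt (fun y : ℝ => 2 * y) 2 x := by
      simpa using (hasDerivAt_id x).const_mul 2
    have h5 := (h3.add h4).sub_const 1
    refine h5.congr_deriv ?_
    ring
  have hmono : StrictMonoOn g (Set.Ici 0) := by
    apply strictMonoOn_of_deriv_pos (convex_Ici 0)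
    · exact (Continuous.continuousOn (by continuity))
    · intro x hx
      rw [interior_Ici] at hx
      rw [(hderiv x).deriv]
      have hxpos : 0 < x := hx
      have he1 : Real.exp (-x) < 1 := by
        rw [Real.exp_lt_one_iff]; linarith
      have he0 : 0 < Real.exp (-x) := Real.exp_pos _
      nlinarith [sq_nonneg (x - 1), sq_nonneg x, mul_pos he0 hxpos]
  have h0 : g 0 = 0 := by simp [hg]
  have := hmono (Set.self_mem_Ici) (Set.mem_Ici.2 ha.le) ha
  rw [h0] at this
  simpa [hg] using this

private lemma etd_f_pos (a : ℝ) (ha : 0 < a) :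
    1 + a - a ^ 2 < Real.exp (-a) * (1 + a) ^ 2 := by
  set f : ℝ → ℝ := fun x => Real.exp (-x) * (1 + x) ^ 2 - 1 - x + x ^ 2 with hf
  have hderiv : ∀ x : ℝ, HasDerivAt f (Real.exp (-x) * (1 - x ^ 2) + 2 * x - 1) x := by
    intro x
    have h1 : HasDerivAt (fun y : ℝ => Real.exp (-y)) (-Real.exp (-x)) x := by
      exact ((Real.hasDerivAt_exp (-x)).comp x ((hasDerivAt_id x).neg)).congr_deriv (by simp)
    have h2 : HasDerivAt (fun y : ℝ => (1 + y) ^ 2) (2 * (1 + x)) x := by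
      have := ((hasDerivAt_id x).const_add 1).pow 2
      exact this.congr_deriv (by simp)
    have h3 : HasDerivAt (fun y : ℝ => Real.exp (-y) * (1 + y) ^ 2)
        (-Real.exp (-x) * (1 + x) ^ 2 + Real.exp (-x) * (2 * (1 + x))) x := h1.mul h2
    have h4 : HasDerivAt (fun y : ℝ => y ^ 2) (2 * x) x := by
      simpa using hasDerivAt_pow 2 x
    have h5 := ((h3.sub_const 1).sub (hasDerivAt_id x)).add h4
    refine h5.congr_deriv ?_
    ring
  have hmono : StrictMonoOn f (Set.Ici 0) := by
    apply strictMonoOn_of_deriv_pos (convex_Ici 0)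
    · exact (Continuous.continuousOn (by continuity))
    · intro x hx
      rw [interior_Ici] at hx
      rw [(hderiv x).deriv]
      exact etd_g_pos x hx
  have h0 : f 0 = 0 := by simp [hf]
  have := hmono (Set.self_mem_Ici) (Set.mem_Ici.2 ha.le) ha
  rw [h0] at this
  simp only [hf] at this
  nlinarith [this]

theorem etd_phi1_sub_phi2_bound (a : ℝ) (ha : 0 < a) :
    0 < (1 + a) * ((1 - Real.exp (-a)) / a - (Real.exp (-a) - 1 + a) / a ^ 2) ∧
      (1 + a) * ((1 - Real.exp (-a)) / a - (Real.exp (-a) - 1 + a) / a ^ 2) < 1 := by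
  have hexp : a + 1 < Real.exp a := Real.add_one_lt_exp (ne_of_gt ha)
  have hinv : Real.exp (-a) = 1 / Real.exp a := by
    rw [Real.exp_neg]; exact (inv_eq_one_div _)
  have hepos : 0 < Real.exp a := Real.exp_pos a
  have hkey := etd_f_pos a ha
  have ha2 : (0:ℝ) < a ^ 2 := by positivity
  constructor
  · -- need (1+a)*((a+1)(1-x) - a) > 0 where x = exp(-a)
    have hx : Real.exp (-a) * (a + 1) < 1 := by
      rw [hinv, div_mul_eq_mul_div, div_lt_one hepos]
      linarith
    rw [div_sub_div _ _ (ne_of_gt ha) (ne_of_gt ha2)]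
    apply mul_pos (by linarith)
    apply div_pos _ (by positivity)
    nlinarith [Real.exp_pos (-a)]
  · rw [div_sub_div _ _ (ne_of_gt ha) (ne_of_gt ha2), ← mul_div_assoc, div_lt_one (by positivity : (0:ℝ) < a * a ^ 2)]
    nlinarith [Real.exp_pos (-a), mul_pos ha ha2]
end
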